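/- Let e ≥ 2, let h = (1, 3, h_2, ..., h_e) be a symmetric sequence of positive integers (h_i = h_{e-i}), and let i ≤ ⌊e/2⌋ with h_i < C(i+2, 2). Suppose there exists a sequence a = (a_1 = 1, a_2, ..., a_e) with a_k = a_{e+1-k} for all 1 ≤ k ≤ e, which is an SI-sequence (as an h-vector with socle degree e-1 after reindexing), such that Δ defined by Δ_0 = 1, Δ_1 = 2, Δ_k = h_k - a_k for 2 ≤ k ≤ e is an O-sequence. If a_i = C(i+1, 2), then h_{i-1} = C(i+1, 2) and h_i - h_{i-1} ≤ h_{i-1} - h_{i-2}. -/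
import Mathlib


/-- `msucc i n` is Macaulay's `n^{<i>}`: from the `i`-binomial expansion
`n = C(n_i,i) + ... + C(n_j,j)` (computed greedily), replace each term
`C(n_k,k)` by `C(n_k+1,k+1)`.  By convention `msucc i 0 = 0` and `msucc 0 n = 0`. -/
def msucc : ℕ → ℕ → ℕ
  | 0, _ => 0
  | _ + 1, 0 => 0
  | (i + 1), (n + 1) =>
      let m := Nat.findGreatest (fun k => Nat.choose k (i + 1) ≤ n + 1) (n + i + 2)
      Nat.choose (m + 1) (i + 2) + msucc i ((n + 1) - Nat.choose m (i + 1))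

/-- An (infinite) O-sequence: starts with 1 and satisfies Macaulay's growth condition. -/
def IsOSeq (h : ℕ → ℕ) : Prop :=
  h 0 = 1 ∧ ∀ d, 1 ≤ d → h (d + 1) ≤ msucc d (h d)

/-- A finite O-sequence of length `d` (entries of degree `0,…,d`). -/
def FinOSeq (g : ℕ → ℕ) (d : ℕ) : Prop :=
  g 0 = 1 ∧ ∀ k, 1 ≤ k → k + 1 ≤ d → g (k + 1) ≤ msucc k (g k)

/-- First difference of a sequence, with `(Diff h) 0 = 1`. -/
def Diff (h : ℕ → ℕ) : ℕ → ℕ := fun k => if k = 0 then 1 else h k - h (k - 1)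

/-- An SI-sequence of socle degree `e`: symmetric and its first half is differentiable. -/
def IsSISeq (h : ℕ → ℕ) (e : ℕ) : Prop :=
  (∀ i ≤ e, h i = h (e - i)) ∧ FinOSeq (Diff h) (e / 2)

/-- Unimodality of `(h 0, …, h e)`. -/
def Unimodal (h : ℕ → ℕ) (e : ℕ) : Prop :=
  ∃ m ≤ e, (∀ i j, i ≤ j → j ≤ m → h i ≤ h j) ∧ (∀ i j, m ≤ i → i ≤ j → j ≤ e → h j ≤ h i)

lemma msucc_zero (k : ℕ) : msucc k 0 = 0 := by cases k <;> rfl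

lemma msucc_le (k : ℕ) : ∀ n, n ≤ k + 1 → msucc k n ≤ n + 1 := by
  induction k with
  | zero => intro n _; simp [msucc]
  | succ k ih =>
    intro n hn
    match n with
    | 0 => simp [msucc]
    | n + 1 =>
      rw [msucc]
      rcases Nat.lt_or_ge (n + 1) (k + 2) with hc | hc
      · have hm : Nat.findGreatest (fun m => Nat.choose m (k + 1) ≤ n + 1) (n + k + 2) = k + 1 := by
          rw [Nat.findGreatest_eq_iff]
          refine ⟨by omega, fun _ => by simp, fun m hm1 hm2 => ?_⟩
          simp only [Nat.not_le]
          calc n + 1 < k + 2 := hc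
            _ = Nat.choose (k + 2) (k + 1) := (Nat.choose_succ_self_right _).symm
            _ ≤ Nat.choose m (k + 1) := Nat.choose_le_choose _ hm1
        simp only [hm, Nat.choose_self, Nat.choose_succ_self_right]
        simp only [Nat.add_sub_cancel]
        have := ih n (by omega)
        omega
      · have hn2 : n + 1 = k + 2 := by omega
        have hm : Nat.findGreatest (fun m => Nat.choose m (k + 1) ≤ n + 1) (n + k + 2) = k + 2 := by
          rw [Nat.findGreatest_eq_iff]
          refine ⟨by omega, fun _ => by simp [Nat.choose_succ_self_right]; omega, fun m hm1 hm2 => ?_⟩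
          simp only [Nat.not_le]
          have h1 : Nat.choose (k + 3) (k + 1) ≤ Nat.choose m (k + 1) := Nat.choose_le_choose _ hm1
          have h2 : Nat.choose (k + 3) (k + 1) = Nat.choose (k + 3) 2 := by
            rw [← Nat.choose_symm (by omega)]; congr 1; omega
          have h3 : Nat.choose (k + 3) 2 = Nat.choose (k + 2) 1 + Nat.choose (k + 2) 2 :=
            Nat.choose_succ_succ _ _
          have h4 : 0 < Nat.choose (k + 2) 2 := Nat.choose_pos (by omega)
          simp only [Nat.choose_one_right] at h3
          omega
        rw [hm]
        have : n + 1 - Nat.choose (k + 2) (k + 1) = 0 := by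
          simp [Nat.choose_succ_self_right]; omega
        rw [this, msucc_zero, Nat.choose_succ_self_right]
        omega

lemma pascal2 (k : ℕ) : Nat.choose (k + 2) 2 = Nat.choose (k + 1) 2 + (k + 1) := by
  rw [Nat.choose_succ_succ]
  simp [Nat.choose_one_right]
  omega


/-- One case of the differentiability step in the proof of Stanley's codimension 3
theorem: with `h, a, Δ` as in the proof and `a i = C(i+1,2)`, one gets
`h (i-1) = C(i+1,2)` and `h i - h (i-1) ≤ h (i-1) - h (i-2)`. -/
theorem stmt11 (e : ℕ) (he : 2 ≤ e) (h a : ℕ → ℕ) (i : ℕ)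
    (h0 : h 0 = 1) (h1 : h 1 = 3) (hpos : ∀ k ≤ e, 0 < h k)
    (hsym : ∀ k ≤ e, h k = h (e - k))
    (hie : i ≤ e / 2) (hgen : h i < Nat.choose (i + 2) 2)
    (ha1 : a 1 = 1)
    (hasym : ∀ k, 1 ≤ k → k ≤ e → a k = a (e + 1 - k))
    (haSI : IsSISeq (fun m => a (m + 1)) (e - 1))
    (hah : ∀ k, 2 ≤ k → k ≤ e → a k ≤ h k)
    (hΔ : FinOSeq (fun k => if k = 0 then 1 else if k = 1 then 2 else h k - a k) e)
    (hai : a i = Nat.choose (i + 1) 2) :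
    h (i - 1) = Nat.choose (i + 1) 2 ∧
    (h i : ℤ) - h (i - 1) ≤ (h (i - 1) : ℤ) - h (i - 2) := by
  rcases Nat.lt_or_ge i 3 with hi3 | hi3
  · interval_cases i
    · exfalso
      have := hpos 0 (by omega)
      simp [Nat.choose_self] at hgen
      omega
    · exfalso
      norm_num [Nat.choose] at hgen
      omega
    · constructor
      · show h 1 = Nat.choose 3 2
        rw [h1]
        decide
      · show (h 2 : ℤ) - h 1 ≤ (h 1 : ℤ) - h 0
        norm_num [Nat.choose] at hgen
        rw [h0, h1]
        push_cast
        omega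
  · -- main case i ≥ 3
    obtain ⟨j, rfl⟩ : ∃ j, i = j + 3 := ⟨i - 3, by omega⟩
    replace hai : a (j + 3) = Nat.choose (j + 4) 2 := hai
    replace hgen : h (j + 3) < Nat.choose (j + 5) 2 := hgen
    have he6 : 6 ≤ e := by omega
    have him : j + 2 ≤ (e - 1) / 2 := by omega
    obtain ⟨-, -, gstep⟩ := haSI
    -- reduction of Diff
    have hDred : ∀ k, 1 ≤ k → Diff (fun m => a (m + 1)) k = a (k + 1) - a k := by
      intro k hk
      have hk1 : k - 1 + 1 = k := by omega
      simp [Diff, hk1, show k ≠ 0 by omega]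
    -- a 2 ≤ 3
    have ha2 : a 2 ≤ 3 := by
      have e1 : a 2 = a (e - 1) := by
        have t := hasym 2 (by omega) (by omega)
        rw [show e + 1 - 2 = e - 1 by omega] at t
        exact t
      have e2 : a (e - 1) ≤ h (e - 1) := hah (e - 1) (by omega) (by omega)
      have e3 : h (e - 1) = 3 := by
        rw [hsym (e - 1) (by omega), show e - (e - 1) = 1 by omega, h1]
      omega
    -- difference bound
    have hDb : ∀ k, 1 ≤ k → k ≤ (e - 1) / 2 → Diff (fun m => a (m + 1)) k ≤ k + 1 := by
      intro k hk
      induction k, hk using Nat.le_induction with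
      | base =>
        intro _
        have hx : Diff (fun m => a (m + 1)) 1 = a 2 - a 1 := hDred 1 le_rfl
        rw [hx, ha1]
        omega
      | succ k hk ih =>
        intro hk2
        have hs := gstep k hk (by omega)
        have hb := msucc_le k _ (ih (by omega))
        omega
    -- step bound on a
    have astep : ∀ k, 1 ≤ k → k ≤ (e - 1) / 2 → a (k + 1) ≤ a k + (k + 1) := by
      intro k hk hk2
      have hx := hDb k hk hk2
      rw [hDred k hk] at hx
      omega
    -- upper bound on a
    have aub : ∀ k, 1 ≤ k → k ≤ j + 3 → a k ≤ Nat.choose (k + 1) 2 := by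
      intro k hk
      induction k, hk using Nat.le_induction with
      | base => intro _; simp [ha1]
      | succ k hk ih =>
        intro hk2
        have hx := astep k hk (by omega)
        have hy := ih (by omega)
        have hz : Nat.choose (k + 1 + 1) 2 = Nat.choose (k + 1) 2 + (k + 1) := pascal2 k
        omega
    -- exact values of a (j+2), a (j+1)
    have p4 : Nat.choose (j + 4) 2 = Nat.choose (j + 3) 2 + (j + 3) := pascal2 (j + 2)
    have p3 : Nat.choose (j + 3) 2 = Nat.choose (j + 2) 2 + (j + 2) := pascal2 (j + 1)
    have p5 : Nat.choose (j + 5) 2 = Nat.choose (j + 4) 2 + (j + 4) := pascal2 (j + 3)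
    have ha2' : a (j + 2) = Nat.choose (j + 3) 2 := by
      have u : a (j + 2) ≤ Nat.choose (j + 3) 2 := aub (j + 2) (by omega) (by omega)
      have s : a (j + 3) ≤ a (j + 2) + (j + 3) := astep (j + 2) (by omega) (by omega)
      omega
    have ha1' : a (j + 1) = Nat.choose (j + 2) 2 := by
      have u : a (j + 1) ≤ Nat.choose (j + 2) 2 := aub (j + 1) (by omega) (by omega)
      have s : a (j + 2) ≤ a (j + 1) + (j + 2) := astep (j + 1) (by omega) (by omega)
      omega
    -- bound h k ≤ a k + (k+1)
    have ΔB : ∀ k, 2 ≤ k → k ≤ e → h k - a k ≤ k + 1 := by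
      intro k hk
      induction k, hk using Nat.le_induction with
      | base =>
        intro _
        have hs := hΔ.2 1 le_rfl (by omega)
        norm_num at hs
        have hm : msucc 1 2 = 3 := by decide
        omega
      | succ k hk ih =>
        intro hke
        have hs := hΔ.2 k (by omega) (by omega)
        simp only [] at hs
        rw [if_neg (show ¬(k + 1 = 0) by omega), if_neg (show ¬(k + 1 = 1) by omega),
          if_neg (show ¬(k = 0) by omega), if_neg (show ¬(k = 1) by omega)] at hs
        have hb := msucc_le k _ (ih (by omega))
        omega
    have hhb : ∀ k, 1 ≤ k → k ≤ e → h k ≤ a k + (k + 1) := by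
      intro k hk hke
      rcases Nat.eq_or_lt_of_le hk with rfl | hk2
      · rw [h1, ha1]
      · have t1 := ΔB k (by omega) hke
        have t2 := hah k (by omega) hke
        omega
    -- lower bound on h (j+2)
    have hlow : Nat.choose (j + 4) 2 ≤ h (j + 2) := by
      have e1 : h (j + 2) = h (e - (j + 2)) := hsym (j + 2) (by omega)
      have e2 : a (j + 3) = a (e - (j + 2)) := by
        rw [hasym (j + 3) (by omega) (by omega)]; congr 1; omega
      have e3 : a (e - (j + 2)) ≤ h (e - (j + 2)) := hah _ (by omega) (by omega)
      omega
    have hup1 : h (j + 2) ≤ Nat.choose (j + 4) 2 := by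
      have t : h (j + 2) ≤ a (j + 2) + (j + 3) := hhb (j + 2) (by omega) (by omega)
      omega
    have hup2 : h (j + 1) ≤ Nat.choose (j + 3) 2 := by
      have t : h (j + 1) ≤ a (j + 1) + (j + 2) := hhb (j + 1) (by omega) (by omega)
      omega
    constructor
    · show h (j + 2) = Nat.choose (j + 4) 2
      omega
    · show (h (j + 3) : ℤ) - h (j + 2) ≤ (h (j + 2) : ℤ) - h (j + 1)
      have e1 : h (j + 2) = Nat.choose (j + 4) 2 := by omega
      push_cast
      omega
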